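/- Let G = ((V,E),(V_1,V_2), v_in, AP, L) be a labeled game graph with n = |V| vertices and let 0 ≤ m ≤ |AP|. If there exists a player-1 strategy π_1 such that for every player-2 strategy π_2, |L(ω(v_in,π_1,π_2))| ≥ m, then there exists a player-1 strategy π_1' such that for every player-2 strategy π_2, |L(ω(v_in,π_1',π_2) ↾ m·n)| ≥ m, i.e., at least m distinct propositions are visited within the first m·n steps of the play. -/

import Mathlib

/-- `π` is a valid strategy for the player owning the vertices satisfying `owns`:
for every history `w` and current vertex `v` owned by the player, the chosen
successor `π w v` is along an edge of the game graph. -/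
def IsStrat {V : Type*} (E : V → V → Prop) (owns : V → Prop)
    (π : List V → V → V) : Prop :=
  ∀ (w : List V) (v : V), owns v → E v (π w v)

/-- Auxiliary function computing, after `i` steps of the play from `v`, the pair
(current vertex, history of previously visited vertices).  Here `P1 v = true` means
`v` is a player-1 vertex, and `P1 v = false` that it is a player-2 vertex. -/
def playSeq {V : Type*} (P1 : V → Bool) (π1 π2 : List V → V → V) (v : V) :
    ℕ → V × List V
  | 0 => (v, [])
  | i + 1 =>
    let p := playSeq P1 π1 π2 v i
    (if P1 p.1 then π1 p.2 p.1 else π2 p.2 p.1, p.2 ++ [p.1])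

/-- The unique play `ω(v, π1, π2)`: the `i`-th vertex of the infinite play starting
at `v` in which player 1 (resp. player 2) resolves choices at vertices `u` with
`P1 u = true` (resp. `P1 u = false`) using strategy `π1` (resp. `π2`). -/
def play {V : Type*} (P1 : V → Bool) (π1 π2 : List V → V → V) (v : V) (i : ℕ) : V :=
  (playSeq P1 π1 π2 v i).1

/-- Let `G = ((V,E),(V_1,V_2), v_in, AP, L)` be a labeled game graph with `n = |V|`
vertices and `0 ≤ m ≤ |AP|`.  If there exists a player-1 strategy `π_1` such that for
every player-2 strategy `π_2`, `|L(ω(v_in,π_1,π_2))| ≥ m`, then there exists a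
player-1 strategy `π_1'` such that for every player-2 strategy `π_2`,
`|L(ω(v_in,π_1',π_2) ↾ m·n)| ≥ m`: at least `m` distinct propositions are visited
within the first `m·n` steps of the play. -/


lemma playSeq_zero {V : Type*} (P1 : V → Bool) (a b : List V → V → V) (v : V) :
    playSeq P1 a b v 0 = (v, []) := rfl

lemma playSeq_succ {V : Type*} (P1 : V → Bool) (a b : List V → V → V) (v : V) (i : ℕ) :
    playSeq P1 a b v (i+1) =
      (if P1 (playSeq P1 a b v i).1 then a (playSeq P1 a b v i).2 (playSeq P1 a b v i).1
        else b (playSeq P1 a b v i).2 (playSeq P1 a b v i).1,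
       (playSeq P1 a b v i).2 ++ [(playSeq P1 a b v i).1]) := rfl

lemma playSeq_hist_length {V : Type*} (P1 : V → Bool) (a b : List V → V → V) (v : V) :
    ∀ i, (playSeq P1 a b v i).2.length = i := by
  intro i
  induction i with
  | zero => rfl
  | succ i ih => simp [playSeq_succ, ih]

lemma playSeq_hist_head {V : Type*} (P1 : V → Bool) (a b : List V → V → V) (v : V) :
    ∀ i, 0 < i → (playSeq P1 a b v i).2.head? = some v := by
  intro i
  induction i with
  | zero => omega
  | succ i ih =>
    intro _
    rcases Nat.eq_zero_or_pos i with h0 | h0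
    · subst h0; simp [playSeq_succ, playSeq_zero]
    · have := ih h0
      rw [playSeq_succ]
      rcases hl : (playSeq P1 a b v i).2 with _ | ⟨x, t⟩
      · rw [hl] at this; simp at this
      · rw [hl] at this; simpa using this

lemma playSeq_shift {V : Type*} (P1 : V → Bool) (a b : List V → V → V) (v : V) (i : ℕ) :
    ∀ j, playSeq P1 a b v (i + j)
      = ((playSeq P1 (fun w x => a ((playSeq P1 a b v i).2 ++ w) x)
            (fun w x => b ((playSeq P1 a b v i).2 ++ w) x) (playSeq P1 a b v i).1 j).1,
         (playSeq P1 a b v i).2 ++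
           (playSeq P1 (fun w x => a ((playSeq P1 a b v i).2 ++ w) x)
            (fun w x => b ((playSeq P1 a b v i).2 ++ w) x) (playSeq P1 a b v i).1 j).2) := by
  intro j
  induction j with
  | zero => simp [playSeq_zero]
  | succ j ih =>
    have : i + (j + 1) = (i + j) + 1 := by omega
    rw [this, playSeq_succ, ih, playSeq_succ]
    simp

lemma playSeq_congr {V : Type*} (P1 : V → Bool) (a a' b b' : List V → V → V) (v : V) (N : ℕ)
    (H1 : ∀ i < N, P1 (playSeq P1 a b v i).1 = true →
      a (playSeq P1 a b v i).2 (playSeq P1 a b v i).1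
        = a' (playSeq P1 a b v i).2 (playSeq P1 a b v i).1)
    (H2 : ∀ i < N, P1 (playSeq P1 a b v i).1 = false →
      b (playSeq P1 a b v i).2 (playSeq P1 a b v i).1
        = b' (playSeq P1 a b v i).2 (playSeq P1 a b v i).1) :
    ∀ i ≤ N, playSeq P1 a b v i = playSeq P1 a' b' v i := by
  intro i
  induction i with
  | zero => intro _; rfl
  | succ i ih =>
    intro hi
    have hiN : i < N := by omega
    have he := ih (by omega)
    rw [playSeq_succ, playSeq_succ, ← he]
    rcases hP : P1 (playSeq P1 a b v i).1 with _ | _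
    · rw [if_neg (by simp [hP]), if_neg (by simp [hP]), H2 i hiN hP]
    · rw [if_pos (by simp [hP]), if_pos (by simp [hP]), H1 i hiN hP]

def Attr {V : Type*} (E : V → V → Prop) (P1 : V → Bool) (T : Set V) : ℕ → Set V
  | 0 => T
  | j + 1 => Attr E P1 T j ∪
      {x | if P1 x then ∃ u, E x u ∧ u ∈ Attr E P1 T j else ∀ u, E x u → u ∈ Attr E P1 T j}

lemma Attr_mono {V : Type*} (E : V → V → Prop) (P1 : V → Bool) (T : Set V) :
    ∀ {i j}, i ≤ j → Attr E P1 T i ⊆ Attr E P1 T j := by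
  intro i j hij
  induction j with
  | zero => have : i = 0 := by omega
            subst this; exact subset_rfl
  | succ j ih =>
    rcases Nat.eq_or_lt_of_le hij with h | h
    · subst h; exact subset_rfl
    · refine (ih (by omega)).trans ?_
      show Attr E P1 T j ⊆ Attr E P1 T j ∪ _
      exact Set.subset_union_left

lemma Attr_fix {V : Type*} (E : V → V → Prop) (P1 : V → Bool) (T : Set V) (j : ℕ)
    (h : Attr E P1 T (j + 1) = Attr E P1 T j) :
    ∀ i, Attr E P1 T (j + i) = Attr E P1 T j := by
  intro i
  induction i with
  | zero => rfl
  | succ i ih =>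
    have : j + (i + 1) = (j + i) + 1 := by omega
    rw [this]
    show Attr E P1 T (j+i) ∪
      {x | if P1 x then ∃ u, E x u ∧ u ∈ Attr E P1 T (j+i)
        else ∀ u, E x u → u ∈ Attr E P1 T (j+i)} = _
    rw [ih]
    exact h

lemma Attr_stab {V : Type*} [Fintype V] (E : V → V → Prop) (P1 : V → Bool) (T : Set V)
    {v : V} {j : ℕ} (hv : v ∈ Attr E P1 T j) : v ∈ Attr E P1 T (Fintype.card V) := by
  set n := Fintype.card V with hn
  have hfix : ∃ j0 ≤ n, Attr E P1 T (j0 + 1) = Attr E P1 T j0 := by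
    by_contra hc
    push_neg at hc
    have grow : ∀ k ≤ n + 1, k ≤ (Attr E P1 T k).ncard := by
      intro k
      induction k with
      | zero => intro _; omega
      | succ k ih =>
        intro hk
        have h1 := ih (by omega)
        have hss : Attr E P1 T k ⊂ Attr E P1 T (k + 1) :=
          (Attr_mono E P1 T (Nat.le_succ k)).ssubset_of_ne (fun he => hc k (by omega) he.symm)
        have := Set.ncard_lt_ncard hss (Set.toFinite _)
        omega
    have h1 := grow (n + 1) le_rfl
    have h2 : (Attr E P1 T (n + 1)).ncard ≤ n := by
      calc (Attr E P1 T (n + 1)).ncard ≤ (Set.univ : Set V).ncard :=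
            Set.ncard_le_ncard (Set.subset_univ _) (Set.toFinite _)
        _ = n := by rw [Set.ncard_univ, hn, Nat.card_eq_fintype_card]
    omega
  obtain ⟨j0, hj0n, hj0⟩ := hfix
  rcases le_or_gt j n with h | h
  · exact Attr_mono E P1 T h hv
  · have : Attr E P1 T j = Attr E P1 T j0 := by
      have := Attr_fix E P1 T j0 hj0 (j - j0)
      rwa [show j0 + (j - j0) = j by omega] at this
    rw [this] at hv
    exact Attr_mono E P1 T hj0n hv



lemma play_succ {V : Type*} (P1 : V → Bool) (a b : List V → V → V) (v : V) (i : ℕ) :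
    play P1 a b v (i+1) =
      if P1 (playSeq P1 a b v i).1 then a (playSeq P1 a b v i).2 (playSeq P1 a b v i).1
        else b (playSeq P1 a b v i).2 (playSeq P1 a b v i).1 := rfl

def GoodS {V AP : Type*} (E : V → V → Prop) (P1 : V → Bool) (L : V → Set AP)
    (S : Set AP) (k : ℕ) (v : V) : Prop :=
  ∃ π1, IsStrat E (fun v => P1 v = true) π1 ∧
    ∀ π2, IsStrat E (fun v => P1 v = false) π2 →
      k ≤ (S ∪ ⋃ i : ℕ, L (play P1 π1 π2 v i)).ncard

noncomputable def dfltStrat {V : Type*} (E : V → V → Prop) (hE : ∀ v, ∃ u, E v u) :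
    List V → V → V := fun _ v => (hE v).choose

lemma dfltStrat_isStrat {V : Type*} (E : V → V → Prop) (hE : ∀ v, ∃ u, E v u)
    (owns : V → Prop) : IsStrat E owns (dfltStrat E hE) :=
  fun _ v _ => (hE v).choose_spec

lemma mem_attr_of_goodS {V AP : Type*} [Fintype V] [Fintype AP]
    (E : V → V → Prop) (hE : ∀ v, ∃ u, E v u) (P1 : V → Bool) (L : V → Set AP)
    (S : Set AP) (k : ℕ) (v : V) (hS : S.ncard < k) (hg : GoodS E P1 L S k v) :
    v ∈ Attr E P1 {u | ¬ L u ⊆ S ∧ GoodS E P1 L (S ∪ L u) k u} (Fintype.card V) := by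
  classical
  set T := {u : V | ¬ L u ⊆ S ∧ GoodS E P1 L (S ∪ L u) k u} with hT
  suffices hj : ∃ j, v ∈ Attr E P1 T j by
    obtain ⟨j, hj⟩ := hj; exact Attr_stab E P1 T hj
  by_contra hc
  push_neg at hc
  set Ainf := {x : V | ∃ j, x ∈ Attr E P1 T j} with hAinf
  have hvA : v ∉ Ainf := fun ⟨j, hj⟩ => hc j hj
  have hstepP1 : ∀ x, x ∉ Ainf → P1 x = true → ∀ u, E x u → u ∉ Ainf := by
    intro x hx hP u hEu hu
    obtain ⟨j, hj⟩ := hu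
    refine hx ⟨j + 1, ?_⟩
    show x ∈ Attr E P1 T j ∪ {x | if P1 x = true then ∃ u, E x u ∧ u ∈ Attr E P1 T j
      else ∀ u, E x u → u ∈ Attr E P1 T j}
    right
    show (if P1 x = true then ∃ u, E x u ∧ u ∈ Attr E P1 T j
      else ∀ u, E x u → u ∈ Attr E P1 T j)
    rw [if_pos hP]
    exact ⟨u, hEu, hj⟩
  have hstepP2 : ∀ x, x ∉ Ainf → P1 x = false → ∃ u, E x u ∧ u ∉ Ainf := by
    intro x hx hP
    by_contra hno
    push_neg at hno
    set g : V → ℕ := fun u => if h : ∃ j, u ∈ Attr E P1 T j then h.choose else 0 with hgdef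
    set J := Finset.univ.sup g with hJ
    have hall : ∀ u, E x u → u ∈ Attr E P1 T J := by
      intro u hEu
      have hu : ∃ j, u ∈ Attr E P1 T j := hno u hEu
      have h1 : u ∈ Attr E P1 T (g u) := by
        simp only [hgdef]; rw [dif_pos hu]; exact hu.choose_spec
      exact Attr_mono E P1 T (Finset.le_sup (Finset.mem_univ u)) h1
    refine hx ⟨J + 1, ?_⟩
    show x ∈ Attr E P1 T J ∪ {x | if P1 x = true then ∃ u, E x u ∧ u ∈ Attr E P1 T J
      else ∀ u, E x u → u ∈ Attr E P1 T J}
    right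
    show (if P1 x = true then ∃ u, E x u ∧ u ∈ Attr E P1 T J
      else ∀ u, E x u → u ∈ Attr E P1 T J)
    rw [if_neg (by simp [hP])]
    exact hall
  obtain ⟨π1, hπ1, hwin⟩ := hg
  set esc : List V → V → V :=
    fun w x => if h : ∃ u, E x u ∧ u ∉ Ainf then h.choose else dfltStrat E hE w x with hescd
  have hesc : IsStrat E (fun v => P1 v = false) esc := by
    intro w x _
    by_cases h : ∃ u, E x u ∧ u ∉ Ainf
    · simp only [hescd, dif_pos h]; exact h.choose_spec.1
    · simp only [hescd, dif_neg h]; exact (hE x).choose_spec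
  have hescval : ∀ w x, (∃ u, E x u ∧ u ∉ Ainf) → esc w x ∉ Ainf := by
    intro w x hx
    simp only [hescd]
    rw [dif_pos hx]
    exact hx.choose_spec.2
  have hstay : ∀ i, play P1 π1 esc v i ∉ Ainf := by
    intro i
    induction i with
    | zero => exact hvA
    | succ i ih =>
      have ih' : (playSeq P1 π1 esc v i).1 ∉ Ainf := ih
      rw [play_succ]
      rcases hP : P1 (playSeq P1 π1 esc v i).1 with _ | _
      · rw [if_neg (by simp)]
        exact hescval _ _ (hstepP2 _ ih' hP)
      · rw [if_pos rfl]
        exact hstepP1 _ ih' hP _ (hπ1 _ _ hP)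
  have hwine := hwin esc hesc
  have hex : ∃ i, ¬ L (play P1 π1 esc v i) ⊆ S := by
    by_contra hno
    push_neg at hno
    have : S ∪ ⋃ i, L (play P1 π1 esc v i) = S :=
      Set.union_eq_self_of_subset_right (Set.iUnion_subset (fun i => (hno i)))
    rw [this] at hwine
    omega
  set i := Nat.find hex with hidef
  have hfind : ¬ L (play P1 π1 esc v i) ⊆ S := Nat.find_spec hex
  have hmin : ∀ l < i, L (play P1 π1 esc v l) ⊆ S := by
    intro l hl
    have := Nat.find_min hex hl
    by_contra hcon
    exact this hcon
  set u := play P1 π1 esc v i with hu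
  refine hstay i ⟨0, ?_⟩
  show u ∈ T
  refine ⟨hfind, ?_⟩
  set h0 := (playSeq P1 π1 esc v i).2 with hh0
  set π1r : List V → V → V := fun w x => π1 (h0 ++ w) x with hπ1rd
  refine ⟨π1r, fun w x hx => hπ1 (h0 ++ w) x hx, ?_⟩
  intro π2r hπ2r
  set π2c : List V → V → V :=
    fun w x => if w.length < i then esc w x else π2r (w.drop i) x with hπ2cd
  have hπ2c : IsStrat E (fun v => P1 v = false) π2c := by
    intro w x hx
    simp only [hπ2cd]
    split
    · exact hesc w x hx
    · exact hπ2r _ x hx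
  have hkc := hwin π2c hπ2c
  have hpre : ∀ l ≤ i, playSeq P1 π1 π2c v l = playSeq P1 π1 esc v l := by
    refine playSeq_congr P1 π1 π1 π2c esc v i (fun _ _ _ => rfl) ?_
    intro l hl _
    simp only [hπ2cd]
    rw [if_pos (by rw [playSeq_hist_length]; exact hl)]
  have hueq : (playSeq P1 π1 π2c v i).1 = u := congrArg Prod.fst (hpre i le_rfl)
  have hheq : (playSeq P1 π1 π2c v i).2 = h0 := congrArg Prod.snd (hpre i le_rfl)
  have hb : (fun w x => π2c ((playSeq P1 π1 π2c v i).2 ++ w) x) = π2r := by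
    funext w x
    simp only [hπ2cd]
    rw [if_neg (by rw [List.length_append, playSeq_hist_length]; omega)]
    congr 1
    have hd : List.drop (playSeq P1 π1 π2c v i).2.length ((playSeq P1 π1 π2c v i).2 ++ w) = w :=
      List.drop_left
    rw [playSeq_hist_length] at hd
    exact hd
  have ha : (fun w x => π1 ((playSeq P1 π1 π2c v i).2 ++ w) x) = π1r := by
    funext w x
    simp only [hπ1rd, hheq]
  have htail : ∀ j, play P1 π1 π2c v (i + j) = play P1 π1r π2r u j := by
    intro j
    have h2 := congrArg Prod.fst (playSeq_shift P1 π1 π2c v i j)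
    rw [ha, hb, hueq] at h2
    exact h2
  have hsub : S ∪ ⋃ j, L (play P1 π1 π2c v j) ⊆
      (S ∪ L u) ∪ ⋃ j, L (play P1 π1r π2r u j) := by
    intro p hp
    rcases hp with hp | hp
    · exact Or.inl (Or.inl hp)
    · rw [Set.mem_iUnion] at hp
      obtain ⟨j, hp⟩ := hp
      rcases lt_or_ge j i with hj | hj
      · have heq : play P1 π1 π2c v j = play P1 π1 esc v j :=
          congrArg Prod.fst (hpre j hj.le)
        rw [play, play] at heq
        rw [show (play P1 π1 π2c v j) = (play P1 π1 esc v j) from heq] at hp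
        exact Or.inl (Or.inl (hmin j hj hp))
      · rw [show j = i + (j - i) by omega, htail] at hp
        exact Or.inr (Set.mem_iUnion.2 ⟨j - i, hp⟩)
  exact le_trans hkc (Set.ncard_le_ncard hsub (Set.toFinite _))

lemma Attr_succ_def {V : Type*} (E : V → V → Prop) (P1 : V → Bool) (T : Set V) (j : ℕ) :
    Attr E P1 T (j+1) = Attr E P1 T j ∪
      {x | if P1 x then ∃ u, E x u ∧ u ∈ Attr E P1 T j
        else ∀ u, E x u → u ∈ Attr E P1 T j} := rfl

lemma step_bound {V AP : Type*} [Fintype AP] (P1 : V → Bool) (L : V → Set AP)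
    (π1 π2 a b : List V → V → V) (v u : V) (S : Set AP) (k N : ℕ)
    (hsucc : ∀ i, play P1 π1 π2 v (1 + i) = play P1 a b u i)
    (hk : k ≤ (S ∪ ⋃ i ∈ Set.Iic N, L (play P1 a b u i)).ncard) :
    k ≤ (S ∪ ⋃ i ∈ Set.Iic (N + 1), L (play P1 π1 π2 v i)).ncard := by
  refine le_trans hk (Set.ncard_le_ncard ?_ (Set.toFinite _))
  intro p hp
  simp only [Set.mem_union, Set.mem_iUnion, Set.mem_Iic, exists_prop] at hp ⊢
  rcases hp with hp | ⟨i, hi, hpi⟩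
  · exact Or.inl hp
  · refine Or.inr ⟨1 + i, by omega, ?_⟩
    rw [hsucc i]
    exact hpi

lemma reach_lemma {V AP : Type*} [Fintype V] [Fintype AP]
    (E : V → V → Prop) (hE : ∀ v, ∃ u, E v u) (P1 : V → Bool) (L : V → Set AP) (t : ℕ)
    (hIH : ∀ (S : Set AP) (k : ℕ) (v : V), k ≤ S.ncard + t → GoodS E P1 L S k v →
      ∃ π1, IsStrat E (fun v => P1 v = true) π1 ∧
        ∀ π2, IsStrat E (fun v => P1 v = false) π2 →
          k ≤ (S ∪ ⋃ i ∈ Set.Iic (t * Fintype.card V), L (play P1 π1 π2 v i)).ncard)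
    (S : Set AP) (k : ℕ) (hk : k ≤ S.ncard + t + 1) :
    ∀ j (v : V), v ∈ Attr E P1 {u | ¬ L u ⊆ S ∧ GoodS E P1 L (S ∪ L u) k u} j →
      ∃ π1, IsStrat E (fun v => P1 v = true) π1 ∧
        ∀ π2, IsStrat E (fun v => P1 v = false) π2 →
          k ≤ (S ∪ ⋃ i ∈ Set.Iic (j + t * Fintype.card V), L (play P1 π1 π2 v i)).ncard := by
  classical
  intro j
  induction j with
  | zero =>
    intro v hv
    obtain ⟨hLv, hgood⟩ := hv
    have hcard : k ≤ (S ∪ L v).ncard + t := by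
      have h1 : S.ncard < (S ∪ L v).ncard := by
        refine Set.ncard_lt_ncard ?_ (Set.toFinite _)
        refine (Set.subset_union_left).ssubset_of_ne ?_
        intro he
        exact hLv (he ▸ Set.subset_union_right)
      omega
    obtain ⟨π1, hs, hb⟩ := hIH (S ∪ L v) k v hcard hgood
    refine ⟨π1, hs, fun π2 hπ2 => ?_⟩
    have hbb := hb π2 hπ2
    have heq : (S ∪ L v) ∪ ⋃ i ∈ Set.Iic (t * Fintype.card V), L (play P1 π1 π2 v i)
        = S ∪ ⋃ i ∈ Set.Iic (0 + t * Fintype.card V), L (play P1 π1 π2 v i) := by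
      rw [zero_add, Set.union_assoc]
      congr 1
      refine Set.union_eq_self_of_subset_left ?_
      intro p hp
      exact Set.mem_biUnion (Set.mem_Iic.2 (Nat.zero_le _)) hp
    rw [heq] at hbb
    exact hbb
  | succ j ih =>
    intro v hv
    rw [Attr_succ_def] at hv
    rcases hv with hv | hv
    · obtain ⟨π1, hs, hb⟩ := ih v hv
      refine ⟨π1, hs, fun π2 hπ2 => ?_⟩
      refine le_trans (hb π2 hπ2) (Set.ncard_le_ncard ?_ (Set.toFinite _))
      refine Set.union_subset_union_right S ?_
      refine Set.biUnion_subset_biUnion_left ?_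
      exact Set.Iic_subset_Iic.2 (by omega)
    · have hv' : if P1 v = true then
          (∃ u, E v u ∧ u ∈ Attr E P1 {u | ¬ L u ⊆ S ∧ GoodS E P1 L (S ∪ L u) k u} j)
          else ∀ u, E v u → u ∈ Attr E P1 {u | ¬ L u ⊆ S ∧ GoodS E P1 L (S ∪ L u) k u} j := hv
      rcases hP : P1 v with _ | _
      · -- player-2 vertex
        rw [hP, if_neg (by simp)] at hv'
        have Hfam : ∀ u : V, ∃ π1, IsStrat E (fun v => P1 v = true) π1 ∧
            (E v u → ∀ π2, IsStrat E (fun v => P1 v = false) π2 →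
              k ≤ (S ∪ ⋃ i ∈ Set.Iic (j + t * Fintype.card V),
                L (play P1 π1 π2 u i)).ncard) := by
          intro u
          by_cases hEu : E v u
          · obtain ⟨π1, hs, hb⟩ := ih u (hv' u hEu)
            exact ⟨π1, hs, fun _ => hb⟩
          · exact ⟨dfltStrat E hE, dfltStrat_isStrat E hE _, fun h => absurd h hEu⟩
        choose fam hfam1 hfam2 using Hfam
        set π1 : List V → V → V := fun w x => match w with
          | [] => dfltStrat E hE w x
          | _ :: w' => fam (w'.headD x) w' x with hπ1d
        have hπ1s : IsStrat E (fun v => P1 v = true) π1 := by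
          intro w x hx
          rcases w with _ | ⟨y, w'⟩
          · exact (hE x).choose_spec
          · exact hfam1 _ w' x hx
        refine ⟨π1, hπ1s, fun π2 hπ2 => ?_⟩
        set u := π2 [] v with hud
        have hEu : E v u := hπ2 [] v hP
        have h1 : playSeq P1 π1 π2 v 1 = (u, [v]) := by
          show (if P1 v = true then π1 [] v else π2 [] v, ([] : List V) ++ [v]) = (u, [v])
          rw [hP, if_neg (by simp)]
          simp [hud]
        set a' : List V → V → V := fun w x => π1 ([v] ++ w) x with ha'd
        set b' : List V → V → V := fun w x => π2 ([v] ++ w) x with hb'd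
        have hb's : IsStrat E (fun v => P1 v = false) b' := fun w x hx => hπ2 _ x hx
        have hcong : ∀ i, playSeq P1 (fam u) b' u i = playSeq P1 a' b' u i := by
          intro i
          refine playSeq_congr P1 (fam u) a' b' b' u i ?_ (fun _ _ _ => rfl) i le_rfl
          intro l _ _
          have hhd : (playSeq P1 (fam u) b' u l).2.headD (playSeq P1 (fam u) b' u l).1
              = u := by
            rcases Nat.eq_zero_or_pos l with h0 | h0
            · subst h0; rfl
            · have hh := playSeq_hist_head P1 (fam u) b' u l h0
              rcases hl2 : (playSeq P1 (fam u) b' u l).2 with _ | ⟨y, tl⟩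
              · rw [hl2] at hh; simp at hh
              · rw [hl2] at hh; simp at hh; simp [hh]
          have : a' (playSeq P1 (fam u) b' u l).2 (playSeq P1 (fam u) b' u l).1
              = fam ((playSeq P1 (fam u) b' u l).2.headD (playSeq P1 (fam u) b' u l).1)
                  (playSeq P1 (fam u) b' u l).2 (playSeq P1 (fam u) b' u l).1 := rfl
          rw [this, hhd]
        have hsucc : ∀ i, play P1 π1 π2 v (1 + i) = play P1 (fam u) b' u i := by
          intro i
          have h2 := congrArg Prod.fst (playSeq_shift P1 π1 π2 v 1 i)
          rw [h1] at h2
          have h3 := congrArg Prod.fst (hcong i)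
          rw [play, play, h2, ← h3]
        have hbound := hfam2 u hEu b' hb's
        have := step_bound P1 L π1 π2 (fam u) b' v u S k (j + t * Fintype.card V) hsucc hbound
        rwa [show j + t * Fintype.card V + 1 = j + 1 + t * Fintype.card V by omega] at this
      · -- player-1 vertex
        rw [hP, if_pos rfl] at hv'
        obtain ⟨u, hEu, huA⟩ := hv'
        obtain ⟨π1u, hsu, hbu⟩ := ih u huA
        set π1 : List V → V → V := fun w x => match w with
          | [] => if x = v then u else dfltStrat E hE w x
          | _ :: w' => π1u w' x with hπ1d
        have hπ1s : IsStrat E (fun v => P1 v = true) π1 := by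
          intro w x hx
          rcases w with _ | ⟨y, w'⟩
          · show E x (if x = v then u else dfltStrat E hE [] x)
            by_cases hxv : x = v
            · rw [if_pos hxv, hxv]; exact hEu
            · rw [if_neg hxv]; exact (hE x).choose_spec
          · exact hsu w' x hx
        refine ⟨π1, hπ1s, fun π2 hπ2 => ?_⟩
        have h1 : playSeq P1 π1 π2 v 1 = (u, [v]) := by
          show (if P1 v = true then π1 [] v else π2 [] v, ([] : List V) ++ [v]) = (u, [v])
          rw [hP, if_pos rfl]
          show (if v = v then u else _, [v]) = (u, [v])
          rw [if_pos rfl]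
        set b' : List V → V → V := fun w x => π2 ([v] ++ w) x with hb'd
        have hb's : IsStrat E (fun v => P1 v = false) b' := fun w x hx => hπ2 _ x hx
        have hsucc : ∀ i, play P1 π1 π2 v (1 + i) = play P1 π1u b' u i := by
          intro i
          have h2 := congrArg Prod.fst (playSeq_shift P1 π1 π2 v 1 i)
          rw [h1] at h2
          have ha : (fun w x => π1 ([v] ++ w) x) = π1u := by
            funext w x
            rfl
          rw [play, play, h2, ha]
        have hbound := hbu b' hb's
        have := step_bound P1 L π1 π2 π1u b' v u S k (j + t * Fintype.card V) hsucc hbound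
        rwa [show j + t * Fintype.card V + 1 = j + 1 + t * Fintype.card V by omega] at this

lemma main_lemma {V AP : Type*} [Fintype V] [Fintype AP]
    (E : V → V → Prop) (hE : ∀ v, ∃ u, E v u) (P1 : V → Bool) (L : V → Set AP) :
    ∀ (t : ℕ) (S : Set AP) (k : ℕ) (v : V), k ≤ S.ncard + t → GoodS E P1 L S k v →
      ∃ π1, IsStrat E (fun v => P1 v = true) π1 ∧
        ∀ π2, IsStrat E (fun v => P1 v = false) π2 →
          k ≤ (S ∪ ⋃ i ∈ Set.Iic (t * Fintype.card V), L (play P1 π1 π2 v i)).ncard := by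
  intro t
  induction t with
  | zero =>
    intro S k v hk _
    refine ⟨dfltStrat E hE, dfltStrat_isStrat E hE _, fun π2 _ => ?_⟩
    calc k ≤ S.ncard := by omega
      _ ≤ _ := Set.ncard_le_ncard Set.subset_union_left (Set.toFinite _)
  | succ t ih =>
    intro S k v hk hg
    by_cases hks : k ≤ S.ncard + t
    · obtain ⟨π1, hs, hb⟩ := ih S k v hks hg
      refine ⟨π1, hs, fun π2 hπ2 => le_trans (hb π2 hπ2) (Set.ncard_le_ncard
        (Set.union_subset_union_right S (Set.biUnion_subset_biUnion_left
          (Set.Iic_subset_Iic.2 (Nat.mul_le_mul_right _ (Nat.le_succ t)))))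
        (Set.toFinite _))⟩
    · have hS : S.ncard < k := by omega
      have hmem := mem_attr_of_goodS E hE P1 L S k v hS hg
      obtain ⟨π1, hs, hb⟩ :=
        reach_lemma E hE P1 L t ih S k (by omega) (Fintype.card V) v hmem
      refine ⟨π1, hs, fun π2 hπ2 => ?_⟩
      have hh := hb π2 hπ2
      rwa [show Fintype.card V + t * Fintype.card V = (t+1) * Fintype.card V by ring] at hh


theorem game_maximal_coverage_short_witness
    {V AP : Type*} [Fintype V] [Fintype AP]
    (E : V → V → Prop) (hE : ∀ v, ∃ u, E v u)
    (P1 : V → Bool) (vin : V) (L : V → Set AP)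
    (m : ℕ) (hm : m ≤ Fintype.card AP)
    (h : ∃ π1, IsStrat E (fun v => P1 v = true) π1 ∧
      ∀ π2, IsStrat E (fun v => P1 v = false) π2 →
        m ≤ (⋃ i : ℕ, L (play P1 π1 π2 vin i)).ncard) :
    ∃ π1', IsStrat E (fun v => P1 v = true) π1' ∧
      ∀ π2, IsStrat E (fun v => P1 v = false) π2 →
        m ≤ (⋃ i ∈ Set.Iic (m * Fintype.card V), L (play P1 π1' π2 vin i)).ncard := by
  have hg : GoodS E P1 L ∅ m vin := by
    obtain ⟨π1, hs, hb⟩ := h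
    exact ⟨π1, hs, fun π2 hπ2 => by rw [Set.empty_union]; exact hb π2 hπ2⟩
  obtain ⟨π1', hs, hb⟩ := main_lemma E hE P1 L m ∅ m vin (by simp) hg
  exact ⟨π1', hs, fun π2 hπ2 => by
    have hh := hb π2 hπ2
    rwa [Set.empty_union] at hh⟩
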